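/- If q is odd, then the polynomial x^{(q+1)/2} + a x ∈ F_q[x] is a permutation polynomial of F_q if and only if a^2 - 1 is a nonzero square in F_q. -/
import Mathlib

theorem quadratic_binomial_pp_iff {F : Type*} [Field F] [Fintype F]
    (hq : Odd (Fintype.card F)) (a : F) :
    Function.Bijective (fun c : F => c ^ ((Fintype.card F + 1) / 2) + a * c) ↔
      (a ^ 2 - 1 ≠ 0 ∧ IsSquare (a ^ 2 - 1)) := by
  set q := Fintype.card F with hqdef
  have hchar : ringChar F ≠ 2 := by
    intro h2
    have : (2 : ℕ) ∣ q := by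
      rw [← prime_dvd_char_iff_dvd_card 2, h2]
    exact (Nat.not_even_iff_odd.mpr hq) (even_iff_two_dvd.mpr this)
  have hne : (-1 : F) ≠ 1 := Ring.neg_one_ne_one_of_char_ne_two hchar
  have hcard : 1 < q := Fintype.one_lt_card
  obtain ⟨k, hk⟩ := hq
  have hexp : (q + 1) / 2 = q / 2 + 1 := by omega
  have h2q2 : 2 * (q / 2) = q - 1 := by omega
  have hf : ∀ c : F, c ^ ((q + 1) / 2) + a * c = (c ^ (q / 2) + a) * c := by
    intro c; rw [hexp, pow_succ]; ring
  have hpow : ∀ x : F, x ≠ 0 → x ^ (q / 2) = 1 ∨ x ^ (q / 2) = -1 := by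
    intro x hx
    have h1 : (x ^ (q / 2)) ^ 2 = 1 := by
      rw [← pow_mul, mul_comm, h2q2, FiniteField.pow_card_sub_one_eq_one x hx]
    rcases mul_eq_zero.mp (by linear_combination h1 :
        (x ^ (q/2) - 1) * (x ^ (q/2) + 1) = 0) with h | h
    · left; linear_combination h
    · right; linear_combination h
  have hsq : ∀ x : F, x ≠ 0 → (IsSquare x ↔ x ^ (q / 2) = 1) :=
    fun x hx => FiniteField.isSquare_iff hchar hx
  constructor
  · intro hbij
    have hinj := hbij.injective
    constructor
    · intro h0
      have : a = 1 ∨ a = -1 := by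
        rcases mul_eq_zero.mp (by linear_combination h0 : (a - 1) * (a + 1) = 0) with h | h
        · left; linear_combination h
        · right; linear_combination h
      rcases this with rfl | rfl
      · obtain ⟨u, hu⟩ := FiniteField.exists_nonsquare (F := F) hchar
        have hu0 : u ≠ 0 := fun h => hu (h ▸ ⟨0, by ring⟩)
        have huχ : u ^ (q / 2) = -1 :=
          (hpow u hu0).resolve_left (fun h => hu ((hsq u hu0).mpr h))
        have heq : (fun c : F => c ^ ((q + 1) / 2) + 1 * c) u
            = (fun c : F => c ^ ((q + 1) / 2) + 1 * c) 0 := by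
          simp only [hf, huχ]; ring
        exact hu0 (hinj heq)
      · have heq : (fun c : F => c ^ ((q + 1) / 2) + (-1) * c) 1
            = (fun c : F => c ^ ((q + 1) / 2) + (-1) * c) 0 := by
          simp only [hf, one_pow]; ring
        exact (one_ne_zero : (1:F) ≠ 0) (hinj heq)
    · by_contra hns
      have ha1 : a + 1 ≠ 0 := by
        intro h; apply hns
        exact ⟨0, by linear_combination (a - 1) * h⟩
      have ha2 : a - 1 ≠ 0 := by
        intro h; apply hns
        exact ⟨0, by linear_combination (a + 1) * h⟩
      set t := (a + 1) / (a - 1) with ht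
      have htmul : (a - 1) * t = a + 1 := by
        rw [ht]; field_simp
      have ht0 : t ≠ 0 := div_ne_zero ha1 ha2
      have htns : ¬ IsSquare t := by
        rintro ⟨d, hd⟩
        apply hns
        refine ⟨d * (a - 1), ?_⟩
        linear_combination (-(a - 1)) * htmul + ((a - 1) ^ 2) * hd
      have htχ : t ^ (q / 2) = -1 :=
        (hpow t ht0).resolve_left (fun h => htns ((hsq t ht0).mpr h))
      have ht1 : t ≠ 1 := by
        intro h
        rw [h, mul_one] at htmul
        exact hne (by linear_combination htmul)
      apply ht1
      apply hinj
      simp only [hf, htχ, one_pow]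
      linear_combination htmul
  · rintro ⟨hne0, c, hc⟩
    rw [← Finite.injective_iff_bijective]
    intro x y hxy
    simp only [hf] at hxy
    have ha1 : a + 1 ≠ 0 := fun h => hne0 (by linear_combination (a - 1) * h)
    have ha2 : a - 1 ≠ 0 := fun h => hne0 (by linear_combination (a + 1) * h)
    have hc0 : c ≠ 0 := by
      intro h; apply hne0; rw [hc, h, mul_zero]
    have key : ∀ u v : F, u ≠ 0 → v ≠ 0 → u ^ (q/2) = 1 → v ^ (q/2) = -1 →
        (u ^ (q/2) + a) * u ≠ (v ^ (q/2) + a) * v := by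
      intro u v hu hv hu1 hv1 heq
      rw [hu1, hv1] at heq
      have hcc : c ^ 2 = (a + 1) * (a - 1) := by linear_combination -hc
      have hv2 : (a - 1) * v = (a + 1) * u := by linear_combination -heq
      have hveq : v = (c / (a - 1)) ^ 2 * u := by
        field_simp
        linear_combination (a - 1) * hv2 - u * hcc
      have hone : v ^ (q/2) = 1 := by
        rw [hveq, mul_pow, ← pow_mul, mul_comm 2 (q/2), mul_comm (q/2) 2, h2q2,
          FiniteField.pow_card_sub_one_eq_one _ (div_ne_zero hc0 ha2), one_mul, hu1]
      rw [hone] at hv1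
      exact hne hv1.symm
    by_cases hx0 : x = 0
    · subst hx0
      by_cases hy0 : y = 0
      · exact hy0.symm
      · exfalso
        rw [mul_zero] at hxy
        rcases hpow y hy0 with h | h <;> rw [h] at hxy
        · rcases mul_eq_zero.mp hxy.symm with h' | h'
          · exact ha1 (by linear_combination h')
          · exact hy0 h'
        · rcases mul_eq_zero.mp hxy.symm with h' | h'
          · exact ha2 (by linear_combination h')
          · exact hy0 h'
    · by_cases hy0 : y = 0
      · exfalso
        subst hy0
        rw [mul_zero] at hxy
        rcases hpow x hx0 with h | h <;> rw [h] at hxy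
        · rcases mul_eq_zero.mp hxy with h' | h'
          · exact ha1 (by linear_combination h')
          · exact hx0 h'
        · rcases mul_eq_zero.mp hxy with h' | h'
          · exact ha2 (by linear_combination h')
          · exact hx0 h'
      · rcases hpow x hx0 with hxχ | hxχ <;> rcases hpow y hy0 with hyχ | hyχ
        · rw [hxχ, hyχ] at hxy
          exact mul_left_cancel₀ (fun h => ha1 (by linear_combination h)) hxy
        · exact absurd hxy (key x y hx0 hy0 hxχ hyχ)
        · exact absurd hxy.symm (key y x hy0 hx0 hyχ hxχ)
        · rw [hxχ, hyχ] at hxy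
          exact mul_left_cancel₀ (fun h => ha2 (by linear_combination h)) hxy
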